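/- Most maximally monotone operators have a unique zero: let M(X) be the collection of maximally monotone subsets of X × X, and suppose J assigns to each A ∈ M(X) the map J_A : X → X satisfying (J_A x, x − J_A x) ∈ A for all x ∈ X; set R_A := 2J_A − Id and ρ̃(A, B) := ρ(R_A, R_B). Then there exists a sequence (O_q) of subsets of M(X), each ρ̃-open in M(X) and ρ̃-dense in M(X), such that for every A ∈ ⋂_q O_q the map R_A is super-regular; in particular, for every such A there is exactly one x ∈ X with (x, 0) ∈ A. -/

import Mathlib

set_option linter.unusedSectionVars false

open RealInnerProductSpace Filter

variable {X : Type*} [NormedAddCommGroup X] [InnerProductSpace ℝ X] [CompleteSpace X]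

/-- `T` is nonexpansive. -/
def Nonexpansive (T : X → X) : Prop := ∀ x y : X, ‖T x - T y‖ ≤ ‖x - y‖

/-- `T` is firmly nonexpansive. -/
def FirmlyNonexpansive (T : X → X) : Prop :=
  ∀ x y : X, ‖T x - T y‖ ^ 2 ≤ ⟪x - y, T x - T y⟫

/-- `‖T₁ - T₂‖ₙ = sup_{‖x‖ ≤ n} ‖T₁ x - T₂ x‖`. -/
noncomputable def ballSup (T₁ T₂ : X → X) (n : ℕ) : ℝ :=
  sSup {r : ℝ | ∃ x : X, ‖x‖ ≤ (n : ℝ) ∧ r = ‖T₁ x - T₂ x‖}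

/-- The metric `ρ` on nonexpansive maps. -/
noncomputable def rho (T₁ T₂ : X → X) : ℝ :=
  ∑' n : ℕ, (1 / 2 ^ (n + 1)) *
    (ballSup T₁ T₂ (n + 1) / (1 + ballSup T₁ T₂ (n + 1)))

/-- The metric `ρ̂` on firmly nonexpansive maps: `ρ̂(T₁,T₂) = ρ(2T₁ - Id, 2T₂ - Id)`. -/
noncomputable def rhoHat (T₁ T₂ : X → X) : ℝ :=
  rho (fun x => (2 : ℝ) • T₁ x - x) (fun x => (2 : ℝ) • T₂ x - x)

/-- `T` is super-regular with limit point `xT`. -/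
def SuperRegularAt (T : X → X) (xT : X) : Prop :=
  ∀ s : ℝ, 0 < s → ∀ ε : ℝ, 0 < ε → ∃ N : ℕ, ∀ n ≥ N, ∀ x : X, ‖x‖ ≤ s → ‖T^[n] x - xT‖ < ε

/-- `T` is super-regular. -/
def SuperRegular (T : X → X) : Prop := ∃ xT : X, SuperRegularAt T xT

/-- `T` is a (Banach) contraction. -/
def Contraction (T : X → X) : Prop :=
  ∃ l : ℝ, 0 ≤ l ∧ l < 1 ∧ ∀ x y : X, ‖T x - T y‖ ≤ l * ‖x - y‖

/-- A subset of `X × X` is monotone. -/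
def MonotoneSet (A : Set (X × X)) : Prop :=
  ∀ p ∈ A, ∀ q ∈ A, (0 : ℝ) ≤ ⟪p.1 - q.1, p.2 - q.2⟫

/-- A subset of `X × X` is maximally monotone. -/
def MaxMonotone (A : Set (X × X)) : Prop :=
  MonotoneSet A ∧ ∀ B : Set (X × X), MonotoneSet B → A ⊆ B → A = B

/-! ### Auxiliary lemmas -/

lemma norm_le_of_sq_le_sq' {a b : X} (h : ‖a‖ ^ 2 ≤ ‖b‖ ^ 2) : ‖a‖ ≤ ‖b‖ := by
  nlinarith [norm_nonneg a, norm_nonneg b]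

lemma firmly_of_resolvent {A : Set (X × X)} (hA : MonotoneSet A) {j : X → X}
    (hj : ∀ x : X, (j x, x - j x) ∈ A) : FirmlyNonexpansive j := by
  intro x y
  have h := hA _ (hj x) _ (hj y)
  simp only at h
  have e : (x - j x) - (y - j y) = (x - y) - (j x - j y) := by abel
  rw [e, inner_sub_right, real_inner_self_eq_norm_sq] at h
  linarith [real_inner_comm (x - y) (j x - j y)]

lemma resolvent_unique {A : Set (X × X)} (hA : MonotoneSet A) {x u v : X}
    (hu : (u, x - u) ∈ A) (hv : (v, x - v) ∈ A) : u = v := by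
  have h := hA _ hu _ hv
  simp only at h
  have e : (x - u) - (x - v) = -(u - v) := by abel
  rw [e, inner_neg_right, real_inner_self_eq_norm_sq] at h
  have h2 : ‖u - v‖ = 0 := by nlinarith [norm_nonneg (u - v)]
  exact sub_eq_zero.mp (norm_eq_zero.mp h2)

lemma reflect_nonexp {j : X → X} (hj : FirmlyNonexpansive j) :
    Nonexpansive (fun x => (2 : ℝ) • j x - x) := by
  intro x y
  simp only
  have e : (2 : ℝ) • j x - x - ((2 : ℝ) • j y - y) = (2 : ℝ) • (j x - j y) - (x - y) := by
    rw [smul_sub]; abel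
  rw [e]
  apply norm_le_of_sq_le_sq'
  have hfj := hj x y
  have expand : ‖(2 : ℝ) • (j x - j y) - (x - y)‖ ^ 2
      = ‖(2 : ℝ) • (j x - j y)‖ ^ 2 - 2 * ⟪(2 : ℝ) • (j x - j y), x - y⟫ + ‖x - y‖ ^ 2 := by
    rw [@norm_sub_sq_real]
  rw [expand, norm_smul, real_inner_smul_left]
  have hcomm := real_inner_comm (x - y) (j x - j y)
  simp only [Real.norm_ofNat]
  nlinarith [norm_nonneg (j x - j y)]

lemma firmly_of_nonexp {T : X → X} (hT : Nonexpansive T) :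
    FirmlyNonexpansive (fun x => (2 : ℝ)⁻¹ • (T x + x)) := by
  intro x y
  simp only
  have e : (2 : ℝ)⁻¹ • (T x + x) - (2 : ℝ)⁻¹ • (T y + y)
      = (2 : ℝ)⁻¹ • ((T x - T y) + (x - y)) := by
    rw [← smul_sub]; congr 1; abel
  rw [e]
  have h1 : ‖(2 : ℝ)⁻¹ • ((T x - T y) + (x - y))‖ ^ 2
      = (2 : ℝ)⁻¹ ^ 2 * ‖(T x - T y) + (x - y)‖ ^ 2 := by
    rw [norm_smul]; simp [mul_pow]
  have h2 : ⟪x - y, (2 : ℝ)⁻¹ • ((T x - T y) + (x - y))⟫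
      = (2 : ℝ)⁻¹ * (⟪x - y, T x - T y⟫ + ‖x - y‖ ^ 2) := by
    rw [real_inner_smul_right, inner_add_right, real_inner_self_eq_norm_sq]
  rw [h1, h2, norm_add_sq_real]
  have hT' := hT x y
  have hcomm := real_inner_comm (x - y) (T x - T y)
  nlinarith [norm_nonneg (T x - T y), norm_nonneg (x - y)]

lemma ballSup_set_nonempty (T₁ T₂ : X → X) (n : ℕ) :
    Set.Nonempty {r : ℝ | ∃ x : X, ‖x‖ ≤ (n : ℝ) ∧ r = ‖T₁ x - T₂ x‖} :=
  ⟨‖T₁ 0 - T₂ 0‖, 0, by simp, rfl⟩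

lemma ballSup_bddAbove {T₁ T₂ : X → X} (h₁ : Nonexpansive T₁) (h₂ : Nonexpansive T₂) (n : ℕ) :
    BddAbove {r : ℝ | ∃ x : X, ‖x‖ ≤ (n : ℝ) ∧ r = ‖T₁ x - T₂ x‖} := by
  refine ⟨2 * n + ‖T₁ 0 - T₂ 0‖, ?_⟩
  rintro r ⟨x, hx, rfl⟩
  have h1 := h₁ x 0
  have h2 := h₂ 0 x
  have t : ‖T₁ x - T₂ x‖ ≤ ‖T₁ x - T₁ 0‖ + ‖T₁ 0 - T₂ 0‖ + ‖T₂ 0 - T₂ x‖ :=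
    norm_sub_le_norm_sub_add_norm_sub _ _ _ |>.trans (by
      have := norm_sub_le_norm_sub_add_norm_sub (T₁ 0) (T₂ 0) (T₂ x)
      linarith)
  simp only [sub_zero, zero_sub, norm_neg] at h1 h2 t
  linarith

lemma le_ballSup {T₁ T₂ : X → X} (h₁ : Nonexpansive T₁) (h₂ : Nonexpansive T₂) {n : ℕ} {x : X}
    (hx : ‖x‖ ≤ (n : ℝ)) : ‖T₁ x - T₂ x‖ ≤ ballSup T₁ T₂ n :=
  le_csSup (ballSup_bddAbove h₁ h₂ n) ⟨x, hx, rfl⟩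

lemma ballSup_nonneg {T₁ T₂ : X → X} (h₁ : Nonexpansive T₁) (h₂ : Nonexpansive T₂) (n : ℕ) :
    0 ≤ ballSup T₁ T₂ n :=
  le_trans (norm_nonneg _) (le_ballSup h₁ h₂ (x := 0) (by simp))

lemma ballSup_le {T₁ T₂ : X → X} {n : ℕ} {c : ℝ}
    (hc : ∀ x : X, ‖x‖ ≤ (n : ℝ) → ‖T₁ x - T₂ x‖ ≤ c) : ballSup T₁ T₂ n ≤ c := by
  apply csSup_le (ballSup_set_nonempty T₁ T₂ n)
  rintro r ⟨x, hx, rfl⟩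
  exact hc x hx

lemma ballSup_self (T : X → X) (n : ℕ) : ballSup T T n = 0 := by
  have h : {r : ℝ | ∃ x : X, ‖x‖ ≤ (n : ℝ) ∧ r = ‖T x - T x‖} = {0} := by
    ext r
    simp only [sub_self, norm_zero, Set.mem_setOf_eq, Set.mem_singleton_iff]
    constructor
    · rintro ⟨x, _, rfl⟩; rfl
    · rintro rfl; exact ⟨0, by simp, rfl⟩
  rw [ballSup, h, csSup_singleton]

lemma fdiv_mono {a b : ℝ} (ha : 0 ≤ a) (hab : a ≤ b) : a / (1 + a) ≤ b / (1 + b) := by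
  rw [div_le_div_iff₀ (by linarith) (by linarith)]
  nlinarith

lemma fdiv_nonneg {a : ℝ} (ha : 0 ≤ a) : 0 ≤ a / (1 + a) := div_nonneg ha (by linarith)

lemma fdiv_le_one {a : ℝ} (ha : 0 ≤ a) : a / (1 + a) ≤ 1 := by
  rw [div_le_one (by linarith)]; linarith

lemma fdiv_le_self {a : ℝ} (ha : 0 ≤ a) : a / (1 + a) ≤ a :=
  div_le_self ha (by linarith)

lemma fdiv_add {a b : ℝ} (ha : 0 ≤ a) (hb : 0 ≤ b) :
    (a + b) / (1 + (a + b)) ≤ a / (1 + a) + b / (1 + b) := by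
  have h1 : a / (1 + (a + b)) ≤ a / (1 + a) :=
    div_le_div_of_nonneg_left ha (by linarith) (by linarith)
  have h2 : b / (1 + (a + b)) ≤ b / (1 + b) :=
    div_le_div_of_nonneg_left hb (by linarith) (by linarith)
  rw [add_div]
  linarith

lemma rho_summable {T₁ T₂ : X → X} (h₁ : Nonexpansive T₁) (h₂ : Nonexpansive T₂) :
    Summable (fun n : ℕ => (1 / 2 ^ (n + 1) : ℝ) *
      (ballSup T₁ T₂ (n + 1) / (1 + ballSup T₁ T₂ (n + 1)))) := by
  apply Summable.of_nonneg_of_le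
    (fun n => mul_nonneg (by positivity) (fdiv_nonneg (ballSup_nonneg h₁ h₂ _)))
    (fun n => ?_) ((summable_nat_add_iff 1).mpr summable_geometric_two)
  calc (1 / 2 ^ (n + 1) : ℝ) * (ballSup T₁ T₂ (n + 1) / (1 + ballSup T₁ T₂ (n + 1)))
      ≤ (1 / 2 ^ (n + 1) : ℝ) * 1 := by
        exact mul_le_mul_of_nonneg_left (fdiv_le_one (ballSup_nonneg h₁ h₂ _)) (by positivity)
    _ = (1 / 2 : ℝ) ^ (n + 1) := by rw [mul_one, div_pow, one_pow]

lemma rho_nonneg {T₁ T₂ : X → X} (h₁ : Nonexpansive T₁) (h₂ : Nonexpansive T₂) :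
    0 ≤ rho T₁ T₂ :=
  tsum_nonneg (fun n => mul_nonneg (by positivity) (fdiv_nonneg (ballSup_nonneg h₁ h₂ _)))

lemma rho_self (T : X → X) : rho T T = 0 := by
  unfold rho
  simp [ballSup_self]

lemma rho_term_le {T₁ T₂ : X → X} (h₁ : Nonexpansive T₁) (h₂ : Nonexpansive T₂) (m : ℕ) :
    (1 / 2 ^ (m + 1) : ℝ) * (ballSup T₁ T₂ (m + 1) / (1 + ballSup T₁ T₂ (m + 1)))
      ≤ rho T₁ T₂ :=
  Summable.le_tsum (rho_summable h₁ h₂) m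
    (fun n _ => mul_nonneg (by positivity) (fdiv_nonneg (ballSup_nonneg h₁ h₂ _)))

lemma rho_triangle {T₁ T₂ T₃ : X → X} (h₁ : Nonexpansive T₁) (h₂ : Nonexpansive T₂)
    (h₃ : Nonexpansive T₃) : rho T₁ T₃ ≤ rho T₁ T₂ + rho T₂ T₃ := by
  unfold rho
  rw [← Summable.tsum_add (rho_summable h₁ h₂) (rho_summable h₂ h₃)]
  apply Summable.tsum_le_tsum ?_ (rho_summable h₁ h₃) ((rho_summable h₁ h₂).add (rho_summable h₂ h₃))
  intro n
  rw [← mul_add]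
  apply mul_le_mul_of_nonneg_left ?_ (by positivity)
  have hle : ballSup T₁ T₃ (n + 1) ≤ ballSup T₁ T₂ (n + 1) + ballSup T₂ T₃ (n + 1) := by
    apply ballSup_le
    intro x hx
    calc ‖T₁ x - T₃ x‖ ≤ ‖T₁ x - T₂ x‖ + ‖T₂ x - T₃ x‖ :=
          norm_sub_le_norm_sub_add_norm_sub _ _ _
      _ ≤ _ := add_le_add (le_ballSup h₁ h₂ hx) (le_ballSup h₂ h₃ hx)
  calc ballSup T₁ T₃ (n + 1) / (1 + ballSup T₁ T₃ (n + 1))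
      ≤ (ballSup T₁ T₂ (n + 1) + ballSup T₂ T₃ (n + 1)) /
          (1 + (ballSup T₁ T₂ (n + 1) + ballSup T₂ T₃ (n + 1))) :=
        fdiv_mono (ballSup_nonneg h₁ h₃ _) hle
    _ ≤ _ := fdiv_add (ballSup_nonneg h₁ h₂ _) (ballSup_nonneg h₂ h₃ _)

lemma rho_lt_imp {T₁ T₂ : X → X} (h₁ : Nonexpansive T₁) (h₂ : Nonexpansive T₂) {m : ℕ} {δ : ℝ}
    (hδ : 0 < δ) (h : rho T₁ T₂ < (1 / 2 ^ (m + 1)) * (δ / (1 + δ))) :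
    ∀ x : X, ‖x‖ ≤ ((m : ℝ) + 1) → ‖T₁ x - T₂ x‖ < δ := by
  have hterm := rho_term_le h₁ h₂ m
  have hpos : (0 : ℝ) < 1 / 2 ^ (m + 1) := by positivity
  have hf : ballSup T₁ T₂ (m + 1) / (1 + ballSup T₁ T₂ (m + 1)) < δ / (1 + δ) :=
    lt_of_mul_lt_mul_left (lt_of_le_of_lt hterm h) hpos.le
  have hd : ballSup T₁ T₂ (m + 1) < δ := by
    by_contra hcon
    push_neg at hcon
    exact absurd (fdiv_mono hδ.le hcon) (not_le.mpr hf)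
  intro x hx
  have hx' : ‖x‖ ≤ ((m + 1 : ℕ) : ℝ) := by push_cast; linarith
  exact lt_of_le_of_lt (le_ballSup h₁ h₂ hx') hd

lemma contraction_fixed {T : X → X} {l : ℝ} (hl0 : 0 ≤ l) (hl1 : l < 1)
    (hlip : ∀ x y : X, ‖T x - T y‖ ≤ l * ‖x - y‖) : ∃ z : X, T z = z := by
  have : Nonempty X := ⟨0⟩
  have hc : ContractingWith l.toNNReal T := by
    constructor
    · exact_mod_cast Real.toNNReal_lt_one.mpr hl1
    · apply LipschitzWith.of_dist_le_mul
      intro x y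
      rw [dist_eq_norm, dist_eq_norm, Real.coe_toNNReal l hl0]
      exact hlip x y
  exact ⟨hc.fixedPoint T, hc.fixedPoint_isFixedPt⟩

/-- Stability of iterates of a contraction under `rho`-perturbation. -/
lemma stab {T : X → X} {l : ℝ} (hl0 : 0 ≤ l) (hl1 : l < 1)
    (hlip : ∀ x y : X, ‖T x - T y‖ ≤ l * ‖x - y‖) {xT : X} (hfix : T xT = xT)
    {s ε : ℝ} (hs : 0 < s) (hε : 0 < ε) :
    ∃ r > (0 : ℝ), ∃ N : ℕ, ∀ S : X → X, Nonexpansive S → rho S T < r →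
      ∀ n ≥ N, ∀ x : X, ‖x‖ ≤ s → ‖S^[n] x - xT‖ < ε := by
  have hTnon : Nonexpansive T := fun x y =>
    (hlip x y).trans (mul_le_of_le_one_left (norm_nonneg _) hl1.le)
  have h1l : (0 : ℝ) < 1 - l := by linarith
  set δ : ℝ := ε * (1 - l) / 4 with hδdef
  have hδ : 0 < δ := by positivity
  set M : ℝ := s + 2 * ‖xT‖ + ε / 4 + 1 with hMdef
  set m : ℕ := ⌈M⌉₊ with hmdef
  have hMm : M ≤ (m : ℝ) + 1 := le_trans (Nat.le_ceil M) (by linarith)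
  refine ⟨(1 / 2 ^ (m + 1)) * (δ / (1 + δ)), by positivity, ?_⟩
  have hsx : (0 : ℝ) ≤ s + ‖xT‖ := add_nonneg hs.le (norm_nonneg _)
  obtain ⟨N, hN⟩ : ∃ N : ℕ, l ^ N * (s + ‖xT‖) < ε / 2 := by
    obtain ⟨N, hN⟩ := exists_pow_lt_of_lt_one
      (show (0 : ℝ) < ε / (2 * (s + ‖xT‖ + 1)) by positivity) hl1
    refine ⟨N, ?_⟩
    have h1 : l ^ N * (s + ‖xT‖) ≤ l ^ N * (s + ‖xT‖ + 1) :=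
      mul_le_mul_of_nonneg_left (by linarith) (pow_nonneg hl0 N)
    have h2 : l ^ N * (s + ‖xT‖ + 1) < (ε / (2 * (s + ‖xT‖ + 1))) * (s + ‖xT‖ + 1) :=
      mul_lt_mul_of_pos_right hN (by positivity)
    have h3 : (ε / (2 * (s + ‖xT‖ + 1))) * (s + ‖xT‖ + 1) = ε / 2 := by
      field_simp
    linarith
  refine ⟨N, ?_⟩
  intro S hS hrho n hn x hx
  have hclose : ∀ y : X, ‖y‖ ≤ (m : ℝ) + 1 → ‖S y - T y‖ < δ := rho_lt_imp hS hTnon hδ hrho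
  have he0 : ‖x - xT‖ ≤ s + ‖xT‖ := (norm_sub_le x xT).trans (by linarith)
  have key : ∀ k : ℕ, ‖S^[k] x - xT‖ ≤ l ^ k * (s + ‖xT‖) + ε / 4 := by
    intro k
    induction k with
    | zero => simp only [Function.iterate_zero, id_eq, pow_zero, one_mul]; linarith
    | succ k ih =>
      have hlk : l ^ k * (s + ‖xT‖) ≤ s + ‖xT‖ := by
        have := pow_le_one₀ hl0 hl1.le (n := k)
        nlinarith
      have hyb : ‖S^[k] x‖ ≤ (m : ℝ) + 1 := by
        have hb : ‖S^[k] x‖ ≤ ‖S^[k] x - xT‖ + ‖xT‖ := by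
          calc ‖S^[k] x‖ = ‖(S^[k] x - xT) + xT‖ := by rw [sub_add_cancel]
            _ ≤ ‖S^[k] x - xT‖ + ‖xT‖ := norm_add_le _ _
        have : ‖S^[k] x‖ ≤ M := by
          rw [hMdef]; linarith
        linarith
      have step : ‖S^[k + 1] x - xT‖ ≤ δ + l * ‖S^[k] x - xT‖ := by
        rw [Function.iterate_succ_apply']
        have h2 : ‖T (S^[k] x) - xT‖ ≤ l * ‖S^[k] x - xT‖ := by
          conv_lhs => rw [← hfix]
          exact hlip _ _
        calc ‖S (S^[k] x) - xT‖
            ≤ ‖S (S^[k] x) - T (S^[k] x)‖ + ‖T (S^[k] x) - xT‖ :=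
              norm_sub_le_norm_sub_add_norm_sub _ _ _
          _ ≤ δ + l * ‖S^[k] x - xT‖ := add_le_add (hclose _ hyb).le h2
      have hmul := mul_le_mul_of_nonneg_left ih hl0
      have hδeq : l * (ε / 4) + δ ≤ ε / 4 := by rw [hδdef]; nlinarith
      calc ‖S^[k + 1] x - xT‖ ≤ δ + l * (l ^ k * (s + ‖xT‖) + ε / 4) := by linarith
        _ ≤ l ^ (k + 1) * (s + ‖xT‖) + ε / 4 := by rw [pow_succ]; nlinarith
  have hn' : l ^ n * (s + ‖xT‖) ≤ l ^ N * (s + ‖xT‖) :=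
    mul_le_mul_of_nonneg_right (pow_le_pow_of_le_one hl0 hl1.le hn) hsx
  calc ‖S^[n] x - xT‖ ≤ l ^ n * (s + ‖xT‖) + ε / 4 := key n
    _ < ε := by linarith

/-- The graph of a firmly nonexpansive map as a maximally monotone operator. -/
lemma graph_maxmono {j : X → X} (hj : FirmlyNonexpansive j) :
    MaxMonotone {p : X × X | ∃ x : X, p = (j x, x - j x)} := by
  constructor
  · rintro p ⟨x, rfl⟩ q ⟨y, rfl⟩
    simp only
    have h := hj x y
    have e : (x - j x) - (y - j y) = (x - y) - (j x - j y) := by abel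
    rw [e, inner_sub_right, real_inner_self_eq_norm_sq]
    linarith [real_inner_comm (x - y) (j x - j y)]
  · intro B hB hsub
    refine Set.Subset.antisymm hsub ?_
    rintro ⟨y, v⟩ hyv
    have hmem : (j (y + v), (y + v) - j (y + v)) ∈ B := hsub ⟨y + v, rfl⟩
    have h := hB _ hyv _ hmem
    simp only at h
    have e : v - ((y + v) - j (y + v)) = -(y - j (y + v)) := by abel
    rw [e, inner_neg_right, real_inner_self_eq_norm_sq] at h
    have hy : y = j (y + v) := by
      have hnorm : ‖y - j (y + v)‖ = 0 := by nlinarith [norm_nonneg (y - j (y + v))]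
      exact sub_eq_zero.mp (norm_eq_zero.mp hnorm)
    refine ⟨y + v, ?_⟩
    rw [← hy, add_sub_cancel_left]

lemma rho_le_pointwise {T₁ T₂ : X → X} {γ c : ℝ} (hγ : 0 ≤ γ) (hc : 0 ≤ c)
    (h : ∀ (n : ℕ) (x : X), ‖x‖ ≤ (n : ℝ) + 1 → ‖T₁ x - T₂ x‖ ≤ γ * (c + n + 1)) :
    rho T₁ T₂ ≤ γ * (c + 2) := by
  have hb : ∀ n : ℕ, BddAbove {r : ℝ | ∃ x : X, ‖x‖ ≤ ((n + 1 : ℕ) : ℝ) ∧ r = ‖T₁ x - T₂ x‖} := by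
    intro n
    refine ⟨γ * (c + n + 1), ?_⟩
    rintro r ⟨x, hx, rfl⟩
    exact h n x (by push_cast at hx ⊢; linarith)
  have hnn : ∀ n : ℕ, 0 ≤ ballSup T₁ T₂ (n + 1) := fun n =>
    le_trans (norm_nonneg _) (le_csSup (hb n) ⟨0, by simp; positivity, rfl⟩)
  have hball : ∀ n : ℕ, ballSup T₁ T₂ (n + 1) ≤ γ * (c + n + 1) := fun n =>
    ballSup_le (fun x hx => h n x (by push_cast at hx; linarith))
  have hgeo : HasSum (fun n : ℕ => (1 / 2 : ℝ) ^ n) 2 := by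
    have := hasSum_geometric_of_lt_one (by norm_num : (0 : ℝ) ≤ 1 / 2) (by norm_num)
    norm_num at this
    exact this
  have hn2 : HasSum (fun n : ℕ => (n : ℝ) * (1 / 2) ^ n) 2 := by
    have := hasSum_coe_mul_geometric_of_norm_lt_one
      (r := (1 / 2 : ℝ)) (by rw [Real.norm_eq_abs, abs_of_pos (by norm_num : (0:ℝ) < 1/2)]; norm_num)
    norm_num at this
    exact this
  have hcomp : HasSum (fun n : ℕ => γ * ((c + n + 1) * (1 / 2 : ℝ) ^ (n + 1))) (γ * (c + 2)) := by
    have h1 : HasSum (fun n : ℕ => (γ * (1 / 2 : ℝ)) *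
        ((c + 1) * (1 / 2 : ℝ) ^ n + (n : ℝ) * (1 / 2) ^ n))
        ((γ * (1 / 2)) * ((c + 1) * 2 + 2)) := ((hgeo.mul_left (c + 1)).add hn2).mul_left _
    convert h1 using 1
    · funext n
      rw [pow_succ]
      ring
    · ring
  have hle : ∀ n : ℕ, (1 / 2 ^ (n + 1) : ℝ) *
      (ballSup T₁ T₂ (n + 1) / (1 + ballSup T₁ T₂ (n + 1)))
        ≤ γ * ((c + n + 1) * (1 / 2 : ℝ) ^ (n + 1)) := by
    intro n
    calc (1 / 2 ^ (n + 1) : ℝ) * (ballSup T₁ T₂ (n + 1) / (1 + ballSup T₁ T₂ (n + 1)))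
        ≤ (1 / 2 ^ (n + 1) : ℝ) * ballSup T₁ T₂ (n + 1) :=
          mul_le_mul_of_nonneg_left (fdiv_le_self (hnn n)) (by positivity)
      _ ≤ (1 / 2 ^ (n + 1) : ℝ) * (γ * (c + n + 1)) :=
          mul_le_mul_of_nonneg_left (hball n) (by positivity)
      _ = γ * ((c + n + 1) * (1 / 2 : ℝ) ^ (n + 1)) := by
          rw [div_pow, one_pow]; ring
  have hsum : Summable (fun n : ℕ => (1 / 2 ^ (n + 1) : ℝ) *
      (ballSup T₁ T₂ (n + 1) / (1 + ballSup T₁ T₂ (n + 1)))) :=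
    Summable.of_nonneg_of_le
      (fun n => mul_nonneg (by positivity) (fdiv_nonneg (hnn n))) hle hcomp.summable
  calc rho T₁ T₂ ≤ ∑' n : ℕ, γ * ((c + n + 1) * (1 / 2 : ℝ) ^ (n + 1)) :=
      Summable.tsum_le_tsum hle hsum hcomp.summable
    _ = γ * (c + 2) := hcomp.tsum_eq

/-- most maximally monotone operators have a unique zero. -/
theorem generic_unique_zero
    (J : Set (X × X) → X → X)
    (hJ : ∀ A : Set (X × X), MaxMonotone A → ∀ x : X, (J A x, x - J A x) ∈ A) :
    ∃ O : ℕ → Set (Set (X × X)),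
      (∀ q, O q ⊆ {A : Set (X × X) | MaxMonotone A}) ∧
      (∀ q, ∀ A ∈ O q, ∃ r > (0 : ℝ), ∀ B : Set (X × X), MaxMonotone B →
        rho (fun x => (2 : ℝ) • J B x - x) (fun x => (2 : ℝ) • J A x - x) < r → B ∈ O q) ∧
      (∀ q, ∀ A : Set (X × X), MaxMonotone A → ∀ ε : ℝ, 0 < ε → ∃ B ∈ O q,
        rho (fun x => (2 : ℝ) • J B x - x) (fun x => (2 : ℝ) • J A x - x) < ε) ∧
      (∀ A ∈ ⋂ q, O q,
        SuperRegular (fun x => (2 : ℝ) • J A x - x) ∧ ∃! x : X, (x, (0 : X)) ∈ A) := by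
  classical
  have hRnon : ∀ A : Set (X × X), MaxMonotone A →
      Nonexpansive (fun x => (2 : ℝ) • J A x - x) :=
    fun A hA => reflect_nonexp (firmly_of_resolvent hA.1 (hJ A hA))
  refine ⟨fun q => {A : Set (X × X) | MaxMonotone A ∧ ∃ (xs : X) (r : ℝ), 0 < r ∧ ∃ N : ℕ,
    ∀ B : Set (X × X), MaxMonotone B →
      rho (fun x => (2 : ℝ) • J B x - x) (fun x => (2 : ℝ) • J A x - x) < r →
      ∀ n ≥ N, ∀ x : X, ‖x‖ ≤ (q : ℝ) + 1 →
        ‖(fun x => (2 : ℝ) • J B x - x)^[n] x - xs‖ < 1 / ((q : ℝ) + 1)},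
    fun q A hA => hA.1, ?_, ?_, ?_⟩
  · -- openness
    intro q A hA
    obtain ⟨hAmax, xs, r, hr, N, hprop⟩ := hA
    refine ⟨r / 2, half_pos hr, fun B hB hρ => ⟨hB, xs, r / 2, half_pos hr, N,
      fun B' hB' hρ' => ?_⟩⟩
    apply hprop B' hB'
    have tri := rho_triangle (hRnon B' hB') (hRnon B hB) (hRnon A hAmax)
    linarith
  · -- density
    intro q A hA ε hε
    set T : X → X := fun x => (2 : ℝ) • J A x - x with hT
    have hTnon : Nonexpansive T := hRnon A hA
    set c : ℝ := ‖T 0‖ with hc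
    have hK : (0 : ℝ) < c + 2 := by positivity
    set γ : ℝ := min (1 / 2) (ε / (2 * (c + 2))) with hγdef
    have hγ0 : 0 < γ := lt_min (by norm_num) (by positivity)
    have hγhalf : γ ≤ 1 / 2 := min_le_left _ _
    have hγK : γ * (c + 2) ≤ ε / 2 := by
      have h1 : γ ≤ ε / (2 * (c + 2)) := min_le_right _ _
      have h2 : γ * (c + 2) ≤ (ε / (2 * (c + 2))) * (c + 2) :=
        mul_le_mul_of_nonneg_right h1 hK.le
      have h3 : (ε / (2 * (c + 2))) * (c + 2) = ε / 2 := by field_simp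
      linarith
    set T' : X → X := fun x => (1 - γ) • T x with hT'
    have hT'lip : ∀ x y : X, ‖T' x - T' y‖ ≤ (1 - γ) * ‖x - y‖ := by
      intro x y
      have e : T' x - T' y = (1 - γ) • (T x - T y) := by rw [hT', smul_sub]
      rw [e, norm_smul, Real.norm_eq_abs, abs_of_nonneg (by linarith)]
      exact mul_le_mul_of_nonneg_left (hTnon x y) (by linarith)
    have hT'non : Nonexpansive T' := fun x y =>
      (hT'lip x y).trans (mul_le_of_le_one_left (norm_nonneg _) (by linarith))
    set j : X → X := fun x => (2 : ℝ)⁻¹ • (T' x + x) with hj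
    have hjfirm : FirmlyNonexpansive j := firmly_of_nonexp hT'non
    set B : Set (X × X) := {p : X × X | ∃ x : X, p = (j x, x - j x)} with hB
    have hBmax : MaxMonotone B := graph_maxmono hjfirm
    have hJB : ∀ x : X, J B x = j x := fun x =>
      resolvent_unique hBmax.1 (hJ B hBmax x) ⟨x, rfl⟩
    have hRB : (fun x => (2 : ℝ) • J B x - x) = T' := by
      funext x
      rw [hJB x, hj]
      simp only
      rw [smul_smul]
      norm_num
    obtain ⟨xT, hxT⟩ := contraction_fixed (l := 1 - γ) (by linarith) (by linarith) hT'lip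
    obtain ⟨r, hr, N, hstab⟩ := stab (l := 1 - γ) (by linarith) (by linarith) hT'lip hxT
      (s := (q : ℝ) + 1) (ε := 1 / ((q : ℝ) + 1)) (by positivity) (by positivity)
    refine ⟨B, ⟨hBmax, xT, r, hr, N, ?_⟩, ?_⟩
    · intro B' hB' hρ n hn x hx
      rw [hRB] at hρ
      exact hstab _ (hRnon B' hB') hρ n hn x hx
    · rw [hRB]
      have hpt : ∀ (n : ℕ) (x : X), ‖x‖ ≤ (n : ℝ) + 1 → ‖T' x - T x‖ ≤ γ * (c + n + 1) := by
        intro n x hx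
        have e : T' x - T x = (-γ) • T x := by
          rw [hT']
          simp only
          rw [sub_smul, one_smul, neg_smul]
          abel
        rw [e, norm_smul, Real.norm_eq_abs, abs_neg, abs_of_nonneg hγ0.le]
        have hTx : ‖T x‖ ≤ c + ‖x‖ := by
          have h0 := hTnon x 0
          have h1 : ‖T x‖ ≤ ‖T x - T 0‖ + ‖T 0‖ := by
            calc ‖T x‖ = ‖(T x - T 0) + T 0‖ := by rw [sub_add_cancel]
              _ ≤ ‖T x - T 0‖ + ‖T 0‖ := norm_add_le _ _
          rw [sub_zero] at h0
          rw [hc]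
          linarith
        have : ‖T x‖ ≤ c + (n : ℝ) + 1 := by linarith
        exact mul_le_mul_of_nonneg_left this hγ0.le
      have hbound := rho_le_pointwise hγ0.le (by positivity : (0:ℝ) ≤ c) hpt
      linarith
  · -- intersection
    intro A hA
    rw [Set.mem_iInter] at hA
    have hAmax : MaxMonotone A := (hA 0).1
    set T : X → X := fun x => (2 : ℝ) • J A x - x with hT
    have hTnon : Nonexpansive T := hRnon A hAmax
    have key : ∀ q : ℕ, ∃ (xs : X) (N : ℕ), ∀ n ≥ N, ∀ x : X, ‖x‖ ≤ (q : ℝ) + 1 →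
        ‖T^[n] x - xs‖ < 1 / ((q : ℝ) + 1) := by
      intro q
      obtain ⟨_, xs, r, hr, N, hprop⟩ := hA q
      exact ⟨xs, N, hprop A hAmax (by rw [rho_self]; exact hr)⟩
    choose xs N hxs using key
    have hdist : ∀ p q : ℕ, ‖xs p - xs q‖ ≤ 1 / ((p : ℝ) + 1) + 1 / ((q : ℝ) + 1) := by
      intro p q
      set n := max (N p) (N q) with hn
      have h1 := hxs p n (le_max_left _ _) 0 (by simp; positivity)
      have h2 := hxs q n (le_max_right _ _) 0 (by simp; positivity)
      have h3 : ‖xs p - T^[n] 0‖ = ‖T^[n] 0 - xs p‖ := norm_sub_rev _ _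
      calc ‖xs p - xs q‖ ≤ ‖xs p - T^[n] 0‖ + ‖T^[n] 0 - xs q‖ :=
            norm_sub_le_norm_sub_add_norm_sub _ _ _
        _ ≤ 1 / ((p : ℝ) + 1) + 1 / ((q : ℝ) + 1) := by rw [h3]; linarith
    have hcauchy : CauchySeq xs := by
      apply cauchySeq_of_le_tendsto_0 (fun n : ℕ => 2 / ((n : ℝ) + 1)) ?_ ?_
      · intro a b Q ha hb
        rw [dist_eq_norm]
        have h1 : 1 / ((a : ℝ) + 1) ≤ 1 / ((Q : ℝ) + 1) := by
          apply one_div_le_one_div_of_le (by positivity)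
          have : (Q : ℝ) ≤ (a : ℝ) := by exact_mod_cast ha
          linarith
        have h2 : 1 / ((b : ℝ) + 1) ≤ 1 / ((Q : ℝ) + 1) := by
          apply one_div_le_one_div_of_le (by positivity)
          have : (Q : ℝ) ≤ (b : ℝ) := by exact_mod_cast hb
          linarith
        have h3 := hdist a b
        have h4 : 2 / ((Q : ℝ) + 1) = 1 / ((Q : ℝ) + 1) + 1 / ((Q : ℝ) + 1) := by ring
        linarith
      · have h0 := tendsto_one_div_add_atTop_nhds_zero_nat (𝕜 := ℝ)
        have h2 := h0.const_mul (2 : ℝ)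
        simp only [mul_zero] at h2
        convert h2 using 2 with n
        rw [mul_one_div]
    obtain ⟨xstar, hxstar⟩ := cauchySeq_tendsto_of_complete hcauchy
    have hxsclose : ∀ q : ℕ, ‖xs q - xstar‖ ≤ 2 / ((q : ℝ) + 1) := by
      intro q
      have hcont : Tendsto (fun p : ℕ => ‖xs q - xs p‖) atTop (nhds ‖xs q - xstar‖) :=
        (tendsto_const_nhds.sub hxstar).norm
      apply le_of_tendsto hcont
      filter_upwards [eventually_ge_atTop q] with p hp
      have h1 : 1 / ((p : ℝ) + 1) ≤ 1 / ((q : ℝ) + 1) := by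
        apply one_div_le_one_div_of_le (by positivity)
        have : (q : ℝ) ≤ (p : ℝ) := by exact_mod_cast hp
        linarith
      have h2 := hdist q p
      have h3 : 2 / ((q : ℝ) + 1) = 1 / ((q : ℝ) + 1) + 1 / ((q : ℝ) + 1) := by ring
      linarith
    have hSR : SuperRegularAt T xstar := by
      intro s hs ε hε
      obtain ⟨q, hq⟩ : ∃ q : ℕ, max s (4 / ε) ≤ (q : ℝ) + 1 :=
        ⟨⌈max s (4 / ε)⌉₊, (Nat.le_ceil _).trans (by linarith)⟩
      refine ⟨N q, fun n hn x hx => ?_⟩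
      have h1 := hxs q n hn x (hx.trans ((le_max_left _ _).trans hq))
      have h2 := hxsclose q
      have hq2 : 4 / ε ≤ (q : ℝ) + 1 := (le_max_right _ _).trans hq
      have hq3 : 3 / ((q : ℝ) + 1) < ε := by
        rw [div_lt_iff₀ (by positivity)]
        have h5 : ε * (4 / ε) = 4 := by field_simp
        have h6 := mul_le_mul_of_nonneg_left hq2 hε.le
        nlinarith
      calc ‖T^[n] x - xstar‖ ≤ ‖T^[n] x - xs q‖ + ‖xs q - xstar‖ :=
            norm_sub_le_norm_sub_add_norm_sub _ _ _
        _ < 1 / ((q : ℝ) + 1) + 2 / ((q : ℝ) + 1) := by linarith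
        _ = 3 / ((q : ℝ) + 1) := by ring
        _ < ε := hq3
    have hfix : T xstar = xstar := by
      have hlim : ∀ ε : ℝ, 0 < ε → ‖T xstar - xstar‖ < ε := by
        intro ε hε
        obtain ⟨N0, hN0⟩ := hSR (‖xstar‖ + 1) (by positivity) (ε / 2) (half_pos hε)
        have h1 := hN0 N0 le_rfl xstar (by linarith)
        have h2 := hN0 (N0 + 1) (Nat.le_succ _) xstar (by linarith)
        have h4 : T^[N0 + 1] xstar = T (T^[N0] xstar) := Function.iterate_succ_apply' T N0 xstar
        have h3 : ‖T^[N0 + 1] xstar - T xstar‖ ≤ ‖T^[N0] xstar - xstar‖ := by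
          rw [h4]; exact hTnon _ _
        have h5 : ‖T xstar - T^[N0 + 1] xstar‖ = ‖T^[N0 + 1] xstar - T xstar‖ := norm_sub_rev _ _
        calc ‖T xstar - xstar‖ ≤ ‖T xstar - T^[N0 + 1] xstar‖ + ‖T^[N0 + 1] xstar - xstar‖ :=
              norm_sub_le_norm_sub_add_norm_sub _ _ _
          _ < ε := by rw [h5]; linarith
      by_contra hne
      exact absurd (hlim _ (norm_pos_iff.mpr (sub_ne_zero.mpr hne))) (lt_irrefl _)
    have hJfix : J A xstar = xstar := by
      have h1 : (2 : ℝ) • J A xstar - xstar = xstar := hfix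
      have h2 : (2 : ℝ) • J A xstar = (2 : ℝ) • xstar := by
        have h3 := sub_eq_iff_eq_add.mp h1
        rw [h3, two_smul]
      exact smul_right_injective X two_ne_zero h2
    refine ⟨⟨xstar, hSR⟩, xstar, ?_, ?_⟩
    · have h1 := hJ A hAmax xstar
      rw [hJfix, sub_self] at h1
      exact h1
    · intro y hy
      have hJy : J A y = y := by
        have h := hAmax.1 _ (hJ A hAmax y) _ hy
        simp only at h
        have e : (y - J A y) - 0 = -(J A y - y) := by abel
        rw [e, inner_neg_right, real_inner_self_eq_norm_sq] at h
        have hnorm : ‖J A y - y‖ = 0 := by nlinarith [norm_nonneg (J A y - y)]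
        exact sub_eq_zero.mp (norm_eq_zero.mp hnorm)
      have hfixy : T y = y := by
        rw [hT]
        simp only
        rw [hJy, two_smul]
        abel
      have hlim : ∀ ε : ℝ, 0 < ε → ‖y - xstar‖ < ε := by
        intro ε hε
        obtain ⟨N0, hN0⟩ := hSR (‖y‖ + 1) (by positivity) ε hε
        have h1 := hN0 N0 le_rfl y (by linarith)
        rwa [Function.iterate_fixed hfixy] at h1
      by_contra hne
      exact absurd (hlim _ (norm_pos_iff.mpr (sub_ne_zero.mpr hne))) (lt_irrefl _)
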